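/- With P^{iJ} = (1/√((n−1)!)) {xⁱ, x^{j₁},…,x^{j_{n−1}}} and (P²)^{ik} = P^{iI} P^{kJ} ḡ_{IJ}, for any X ∈ TM it holds that P²(X) = γ² ḡ(X, e_a) g^{ab} e_b. Consequently, for any tangent vector Y ∈ TΣ, P²(Y) = γ² Y. -/

import Mathlib

open scoped BigOperators
noncomputable section

open Classical in
/-- The totally antisymmetric Levi-Civita symbol with `ε^{01⋯(n-1)} = 1`. -/
def eps {n : ℕ} (v : Fin n → Fin n) : ℝ :=
  if h : Function.Bijective v then ((Equiv.Perm.sign (Equiv.ofBijective v h) : ℤ) : ℝ) else 0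

/-- Partial derivative `∂_a f` of a function on the chart `ℝ^ν` of `Σ`. -/
def pd {ν : ℕ} (a : Fin ν) (f : (Fin ν → ℝ) → ℝ) (p : Fin ν → ℝ) : ℝ :=
  fderiv ℝ f p (Pi.single a 1)

/-- The Nambu bracket `{f₁,…,f_ν} = ρ⁻¹ ε^{a₁⋯a_ν} (∂_{a₁}f₁)⋯(∂_{a_ν}f_ν)`. -/
def nb {ν : ℕ} (ρ : (Fin ν → ℝ) → ℝ) (f : Fin ν → (Fin ν → ℝ) → ℝ) (p : Fin ν → ℝ) : ℝ :=
  (ρ p)⁻¹ * ∑ σ : Fin ν → Fin ν, eps σ * ∏ a : Fin ν, pd (σ a) (f a) p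

section Aux
open Matrix

lemma ofBijective_coe {k : ℕ} (π : Equiv.Perm (Fin k)) (h : Function.Bijective ⇑π) :
    Equiv.ofBijective ⇑π h = π := Equiv.ext fun _ => rfl

lemma eps_nonbij {k : ℕ} {v : Fin k → Fin k} (h : ¬ Function.Bijective v) : eps v = 0 := by
  rw [eps, dif_neg h]

lemma sum_eps_mul {k : ℕ} (g : (Fin k → Fin k) → ℝ) :
    ∑ v : Fin k → Fin k, eps v * g v
      = ∑ π : Equiv.Perm (Fin k), ((Equiv.Perm.sign π : ℤ) : ℝ) * g ⇑π := by
  classical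
  rw [← Finset.sum_filter_of_ne (p := fun v => Function.Bijective v)
      (fun v _ hne => by
        by_contra h
        exact hne (by rw [eps_nonbij h, zero_mul]))]
  refine Finset.sum_bij' (i := fun v hv => Equiv.ofBijective v (by simpa using hv))
    (j := fun π _ => ⇑π) ?_ ?_ ?_ ?_ ?_
  · intro a ha; exact Finset.mem_univ _
  · intro π hπ; exact Finset.mem_filter.mpr ⟨Finset.mem_univ _, π.bijective⟩
  · intro a ha; rfl
  · intro π hπ; exact ofBijective_coe π π.bijective
  · intro v hv
    have hb : Function.Bijective v := by simpa using (Finset.mem_filter.mp hv).2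
    rw [eps, dif_pos hb]; rfl

lemma sign_real_sq {k : ℕ} (σ : Equiv.Perm (Fin k)) :
    ((Equiv.Perm.sign σ : ℤ) : ℝ) * ((Equiv.Perm.sign σ : ℤ) : ℝ) = 1 := by
  rcases Int.units_eq_one_or (Equiv.Perm.sign σ) with h | h <;> simp [h]

lemma sum_fun_prod {n μ : ℕ} (f : Fin n → Fin μ → ℝ) :
    ∑ J : Fin n → Fin μ, ∏ l : Fin n, f l (J l) = ∏ l : Fin n, ∑ j : Fin μ, f l j :=
  (Fintype.prod_sum f).symm

lemma sum4_swap {α β : Type*} [Fintype α] [Fintype β] (u : α → α → β → β → ℝ) :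
    (∑ J : β, ∑ J' : β, ∑ σ : α, ∑ τ : α, u σ τ J J')
    = ∑ σ : α, ∑ τ : α, ∑ J : β, ∑ J' : β, u σ τ J J' := by
  calc (∑ J : β, ∑ J' : β, ∑ σ : α, ∑ τ : α, u σ τ J J')
      = ∑ J : β, ∑ σ : α, ∑ J' : β, ∑ τ : α, u σ τ J J' :=
        Finset.sum_congr rfl fun J _ => Finset.sum_comm
    _ = ∑ σ : α, ∑ J : β, ∑ J' : β, ∑ τ : α, u σ τ J J' := Finset.sum_comm
    _ = ∑ σ : α, ∑ J : β, ∑ τ : α, ∑ J' : β, u σ τ J J' :=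
        Finset.sum_congr rfl fun σ _ => Finset.sum_congr rfl fun J _ => Finset.sum_comm
    _ = ∑ σ : α, ∑ τ : α, ∑ J : β, ∑ J' : β, u σ τ J J' :=
        Finset.sum_congr rfl fun σ _ => Finset.sum_comm

lemma perm_double_sum {n : ℕ} (A : Matrix (Fin (n+1)) (Fin (n+1)) ℝ) (F H : Fin (n+1) → ℝ) :
    ∑ σ : Fin (n+1) → Fin (n+1), ∑ τ : Fin (n+1) → Fin (n+1),
      eps σ * eps τ * (F (σ 0) * H (τ 0) * ∏ l : Fin n, A (σ l.succ) (τ l.succ))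
    = (n.factorial : ℝ) * ∑ a, F a * (A.updateRow a H).det := by
  classical
  set N : Fin (n+1) → Matrix (Fin (n+1)) (Fin (n+1)) ℝ :=
    fun a => A.updateRow a (F a • H) with hN
  have inner : ∀ σ : Equiv.Perm (Fin (n+1)),
      ∑ τ : Equiv.Perm (Fin (n+1)), ((Equiv.Perm.sign τ : ℤ) : ℝ) *
        (F (σ 0) * H (τ 0) * ∏ l : Fin n, A (σ l.succ) (τ l.succ))
      = ((Equiv.Perm.sign σ : ℤ) : ℝ) * (N (σ 0)).det := by
    intro σ
    have hprod : ∀ τ : Equiv.Perm (Fin (n+1)),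
        F (σ 0) * H (τ 0) * ∏ l : Fin n, A (σ l.succ) (τ l.succ)
        = ∏ l : Fin (n+1), ((N (σ 0)).submatrix ⇑σ id)ᵀ (τ l) l := by
      intro τ
      have : ∀ l : Fin (n+1), ((N (σ 0)).submatrix ⇑σ id)ᵀ (τ l) l = (N (σ 0)) (σ l) (τ l) := by
        intro l; rfl
      simp_rw [this]
      rw [Fin.prod_univ_succ]
      congr 1
      · simp [hN, Matrix.updateRow_self]
      · refine Finset.prod_congr rfl fun l _ => ?_
        have hne : σ l.succ ≠ σ 0 := fun h => (Fin.succ_ne_zero l) (σ.injective h)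
        simp [hN, Matrix.updateRow_ne hne]
    have key : ∑ τ : Equiv.Perm (Fin (n+1)), ((Equiv.Perm.sign τ : ℤ) : ℝ) *
        (F (σ 0) * H (τ 0) * ∏ l : Fin n, A (σ l.succ) (τ l.succ))
        = (((N (σ 0)).submatrix ⇑σ id)ᵀ).det := by
      rw [Matrix.det_apply]
      refine Finset.sum_congr rfl fun τ _ => ?_
      rw [hprod τ, Units.smul_def, zsmul_eq_mul]
    rw [key, Matrix.det_transpose, Matrix.det_permute]
  have step1 : ∑ σ : Fin (n+1) → Fin (n+1), ∑ τ : Fin (n+1) → Fin (n+1),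
      eps σ * eps τ * (F (σ 0) * H (τ 0) * ∏ l : Fin n, A (σ l.succ) (τ l.succ))
      = ∑ σ : Equiv.Perm (Fin (n+1)), (N (σ 0)).det := by
    have e1 : ∀ σ : Fin (n+1) → Fin (n+1),
        ∑ τ : Fin (n+1) → Fin (n+1),
          eps σ * eps τ * (F (σ 0) * H (τ 0) * ∏ l : Fin n, A (σ l.succ) (τ l.succ))
        = eps σ * ∑ τ : Fin (n+1) → Fin (n+1),
            eps τ * (F (σ 0) * H (τ 0) * ∏ l : Fin n, A (σ l.succ) (τ l.succ)) := by
      intro σ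
      rw [Finset.mul_sum]
      exact Finset.sum_congr rfl fun τ _ => by ring
    simp_rw [e1]
    rw [sum_eps_mul]
    refine Finset.sum_congr rfl fun σ _ => ?_
    rw [sum_eps_mul, inner σ, ← mul_assoc, sign_real_sq, one_mul]
  rw [step1]
  calc ∑ σ : Equiv.Perm (Fin (n+1)), (N (σ 0)).det
      = ∑ pe : Fin (n+1) × Equiv.Perm (Fin n), (N ((Equiv.Perm.decomposeFin.symm pe) 0)).det := by
        rw [Equiv.sum_comp Equiv.Perm.decomposeFin.symm (fun σ => (N (σ 0)).det)]
    _ = (n.factorial : ℝ) * ∑ a, F a * (A.updateRow a H).det := by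
        rw [Fintype.sum_prod_type]
        simp only [Equiv.Perm.decomposeFin_symm_apply_zero]
        simp only [Finset.sum_const, Finset.card_univ, Fintype.card_perm, Fintype.card_fin,
          nsmul_eq_mul]
        rw [Finset.mul_sum]
        refine Finset.sum_congr rfl fun a _ => ?_
        rw [hN, Matrix.det_updateRow_smul]

end Aux

/-- For `Σ^n ⊂ (M^m, ḡ)` (here `n = d+1`), with
`P^{iJ} = (1/√((n−1)!)) {xⁱ,x^{j₁},…,x^{j_{n−1}}}` and `(P²)^{ik} = P^{iI}P^{kJ}ḡ_{IJ}`
viewed as a map `TM → TM` by lowering the second index, one has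
`P²(X) = γ² ḡ(X,e_a) g^{ab} e_b` for all `X ∈ TM`, and `P²(Y) = γ² Y` for `Y ∈ TΣ`. -/
theorem P_squared_props (d m : ℕ)
    (ρ : (Fin (d + 1) → ℝ) → ℝ)
    (x : Fin m → (Fin (d + 1) → ℝ) → ℝ)
    (gbar : (Fin (d + 1) → ℝ) → Matrix (Fin m) (Fin m) ℝ)
    (p : Fin (d + 1) → ℝ)
    (hgbar : (gbar p).PosDef)
    (hρ : ρ p ≠ 0)
    (gind : Matrix (Fin (d + 1)) (Fin (d + 1)) ℝ)
    (hgind : gind = Matrix.of fun a c =>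
      ∑ i, ∑ j, gbar p i j * pd a (x i) p * pd c (x j) p)
    (hgpos : 0 < gind.det)
    (γ : ℝ) (hγ : γ = Real.sqrt gind.det / ρ p)
    (P : Fin m → (Fin d → Fin m) → ℝ)
    (hP : P = fun i J => (Real.sqrt (d.factorial : ℝ))⁻¹ *
      nb ρ (Fin.cons (x i) fun l => x (J l)) p)
    (P2up : Fin m → Fin m → ℝ)
    (hP2up : P2up = fun i k => ∑ J : Fin d → Fin m, ∑ J' : Fin d → Fin m,
      P i J * P k J' * ∏ l : Fin d, gbar p (J l) (J' l))
    (P2X : (Fin m → ℝ) → Fin m → ℝ)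
    (hP2X : P2X = fun X i => ∑ j, ∑ k, P2up i j * gbar p j k * X k) :
    (∀ (X : Fin m → ℝ) (i : Fin m),
      P2X X i = γ ^ 2 * ∑ a, ∑ c,
        (∑ j, ∑ k, gbar p j k * X j * pd a (x k) p) * gind⁻¹ a c * pd c (x i) p) ∧
    (∀ (Y : Fin (d + 1) → ℝ) (i : Fin m),
      P2X (fun j => ∑ a, Y a * pd a (x j) p) i = γ ^ 2 * ∑ a, Y a * pd a (x i) p) := by
  set E : Fin (d+1) → Fin m → ℝ := fun a j => pd a (x j) p with hE
  set G : Matrix (Fin m) (Fin m) ℝ := gbar p with hG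
  have hdet : gind.det ≠ 0 := ne_of_gt hgpos
  have hdetu : IsUnit gind.det := isUnit_iff_ne_zero.mpr hdet
  have hGsym : ∀ i j, G i j = G j i := by
    intro i j
    have h := congrFun (congrFun hgbar.1 i) j
    simpa using h.symm
  have hgind' : ∀ a c, gind a c = ∑ i, ∑ j, G i j * E a i * E c j := fun a c => by
    rw [hgind]; rfl
  have hAsym : gind.transpose = gind := by
    ext a c
    show gind c a = gind a c
    rw [hgind' c a, hgind' a c, Finset.sum_comm]
    refine Finset.sum_congr rfl fun i _ => Finset.sum_congr rfl fun j _ => ?_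
    rw [hGsym j i]; ring
  have hQsym : ∀ a c, gind⁻¹ a c = gind⁻¹ c a := by
    intro a c
    have h : (gind⁻¹).transpose = gind⁻¹ := by rw [Matrix.transpose_nonsing_inv, hAsym]
    calc gind⁻¹ a c = (gind⁻¹).transpose c a := rfl
      _ = gind⁻¹ c a := by rw [h]
  -- determinant of row-updated gind via the inverse
  have hdetrow : ∀ (a : Fin (d+1)) (Hv : Fin (d+1) → ℝ),
      (gind.updateRow a Hv).det = ∑ c, gind.det * (gind⁻¹ a c * Hv c) := by
    intro a Hv
    have h1 : (gind.updateRow a Hv).det = (gind.updateCol a Hv).det := by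
      rw [← Matrix.det_transpose (gind.updateRow a Hv), ← Matrix.updateCol_transpose, hAsym]
    have h2 : gind.det • gind⁻¹ = gind.adjugate := by
      rw [Matrix.inv_def, smul_smul, Ring.inverse_eq_inv', mul_inv_cancel₀ hdet, one_smul]
    rw [h1, ← Matrix.cramer_apply, Matrix.cramer_eq_adjugate_mulVec, ← h2]
    simp only [Matrix.mulVec, dotProduct, Matrix.smul_apply, smul_eq_mul]
    exact Finset.sum_congr rfl fun c _ => by ring
  set r := (ρ p)⁻¹ with hrdef
  set c0 := (Real.sqrt (d.factorial : ℝ))⁻¹ with hc0def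
  have hγ2 : γ^2 = gind.det * (r * r) := by
    rw [hγ, div_pow, Real.sq_sqrt hgpos.le, div_eq_mul_inv, pow_two, mul_inv]
  have hfact : c0 * c0 * (d.factorial : ℝ) = 1 := by
    rw [hc0def, ← mul_inv, Real.mul_self_sqrt (Nat.cast_nonneg _),
      inv_mul_cancel₀ (by positivity)]
  set S : Fin m → (Fin d → Fin m) → ℝ := fun i J => ∑ σ : Fin (d+1) → Fin (d+1),
    eps σ * (E (σ 0) i * ∏ l : Fin d, E (σ l.succ) (J l)) with hS
  have hPf : ∀ (i : Fin m) (J : Fin d → Fin m), P i J = c0 * r * S i J := by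
    intro i J
    simp only [hP, nb, hS]
    rw [mul_assoc]
    congr 2
    refine Finset.sum_congr rfl fun σ _ => ?_
    congr 1
    rw [Fin.prod_univ_succ]
    simp only [Fin.cons_zero, Fin.cons_succ]
    rfl
  have collapse : ∀ σ τ : Fin (d+1) → Fin (d+1),
      ∑ J : Fin d → Fin m, ∑ J' : Fin d → Fin m,
        ((∏ l : Fin d, E (σ l.succ) (J l)) * (∏ l : Fin d, E (τ l.succ) (J' l)) *
          ∏ l : Fin d, G (J l) (J' l))
      = ∏ l : Fin d, gind (σ l.succ) (τ l.succ) := by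
    intro σ τ
    have h1 : ∀ J J' : Fin d → Fin m,
        (∏ l : Fin d, E (σ l.succ) (J l)) * (∏ l : Fin d, E (τ l.succ) (J' l)) *
          ∏ l : Fin d, G (J l) (J' l)
        = ∏ l : Fin d, (E (σ l.succ) (J l) * E (τ l.succ) (J' l) * G (J l) (J' l)) := by
      intro J J'
      rw [← Finset.prod_mul_distrib, ← Finset.prod_mul_distrib]
    simp_rw [h1]
    have h2 : ∀ J : Fin d → Fin m,
        ∑ J' : Fin d → Fin m, ∏ l : Fin d,
          (E (σ l.succ) (J l) * E (τ l.succ) (J' l) * G (J l) (J' l))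
        = ∏ l : Fin d, ∑ j' : Fin m, (E (σ l.succ) (J l) * E (τ l.succ) j' * G (J l) j') :=
      fun J => sum_fun_prod
        (fun l j' => E (σ l.succ) (J l) * E (τ l.succ) j' * G (J l) j')
    simp_rw [h2]
    have h3 : (∑ J : Fin d → Fin m, ∏ l : Fin d,
          ∑ j' : Fin m, (E (σ l.succ) (J l) * E (τ l.succ) j' * G (J l) j'))
        = ∏ l : Fin d, ∑ j : Fin m, ∑ j' : Fin m,
            (E (σ l.succ) j * E (τ l.succ) j' * G j j') :=
      sum_fun_prod (fun l j => ∑ j' : Fin m,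
        (E (σ l.succ) j * E (τ l.succ) j' * G j j'))
    rw [h3]
    refine Finset.prod_congr rfl fun l _ => ?_
    rw [hgind' (σ l.succ) (τ l.succ)]
    refine Finset.sum_congr rfl fun j _ => Finset.sum_congr rfl fun j' _ => by ring
  -- the P² formula
  have hP2 : ∀ i k, P2up i k = γ^2 * ∑ a, ∑ c, E a i * gind⁻¹ a c * E c k := by
    intro i k
    have hps : ∑ σ : Fin (d+1) → Fin (d+1), ∑ τ : Fin (d+1) → Fin (d+1),
        eps σ * eps τ * (E (σ 0) i * E (τ 0) k * ∏ l : Fin d, gind (σ l.succ) (τ l.succ))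
        = (d.factorial : ℝ) * ∑ a, E a i * (gind.updateRow a (fun c => E c k)).det :=
      perm_double_sum gind (fun a => E a i) (fun c => E c k)
    have expand : ∀ J J' : Fin d → Fin m,
        S i J * S k J' * ∏ l : Fin d, G (J l) (J' l)
        = ∑ σ : Fin (d+1) → Fin (d+1), ∑ τ : Fin (d+1) → Fin (d+1),
            eps σ * eps τ * (E (σ 0) i * E (τ 0) k *
              ((∏ l : Fin d, E (σ l.succ) (J l)) * (∏ l : Fin d, E (τ l.succ) (J' l)) *
                ∏ l : Fin d, G (J l) (J' l))) := by
      intro J J'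
      simp only [hS]
      rw [Finset.sum_mul_sum, Finset.sum_mul]
      refine Finset.sum_congr rfl fun σ _ => ?_
      rw [Finset.sum_mul]
      refine Finset.sum_congr rfl fun τ _ => ?_
      ring
    simp only [hP2up]
    calc ∑ J : Fin d → Fin m, ∑ J' : Fin d → Fin m,
          P i J * P k J' * ∏ l : Fin d, G (J l) (J' l)
        = (c0 * c0) * (r * r) * ∑ J : Fin d → Fin m, ∑ J' : Fin d → Fin m,
            S i J * S k J' * ∏ l : Fin d, G (J l) (J' l) := by
          rw [Finset.mul_sum]
          refine Finset.sum_congr rfl fun J _ => ?_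
          rw [Finset.mul_sum]
          refine Finset.sum_congr rfl fun J' _ => ?_
          rw [hPf i J, hPf k J']
          ring
      _ = (c0 * c0) * (r * r) * ∑ σ : Fin (d+1) → Fin (d+1), ∑ τ : Fin (d+1) → Fin (d+1),
            eps σ * eps τ * (E (σ 0) i * E (τ 0) k *
              ∏ l : Fin d, gind (σ l.succ) (τ l.succ)) := by
          congr 1
          simp_rw [expand]
          have hsw : (∑ J : Fin d → Fin m, ∑ J' : Fin d → Fin m,
              ∑ σ : Fin (d+1) → Fin (d+1), ∑ τ : Fin (d+1) → Fin (d+1),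
                eps σ * eps τ * (E (σ 0) i * E (τ 0) k *
                  ((∏ l : Fin d, E (σ l.succ) (J l)) * (∏ l : Fin d, E (τ l.succ) (J' l)) *
                    ∏ l : Fin d, G (J l) (J' l))))
              = ∑ σ : Fin (d+1) → Fin (d+1), ∑ τ : Fin (d+1) → Fin (d+1),
                ∑ J : Fin d → Fin m, ∑ J' : Fin d → Fin m,
                  eps σ * eps τ * (E (σ 0) i * E (τ 0) k *
                    ((∏ l : Fin d, E (σ l.succ) (J l)) * (∏ l : Fin d, E (τ l.succ) (J' l)) *
                      ∏ l : Fin d, G (J l) (J' l))) := sum4_swap _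
          rw [hsw]
          refine Finset.sum_congr rfl fun σ _ => Finset.sum_congr rfl fun τ _ => ?_
          rw [← collapse σ τ]
          simp only [Finset.mul_sum]
      _ = (c0 * c0) * (r * r) * ((d.factorial : ℝ) *
            ∑ a, E a i * (gind.updateRow a (fun c => E c k)).det) := by rw [hps]
      _ = γ^2 * ∑ a, ∑ c, E a i * gind⁻¹ a c * E c k := by
          simp_rw [hdetrow]
          rw [hγ2]
          simp only [Finset.mul_sum]
          refine Finset.sum_congr rfl fun a _ => Finset.sum_congr rfl fun c _ => ?_
          linear_combination (r * r * E a i * gind.det * (gind⁻¹ a c * E c k)) * hfact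
  -- first claim
  have claim1 : ∀ (X : Fin m → ℝ) (i : Fin m),
      P2X X i = γ ^ 2 * ∑ a, ∑ c,
        (∑ j, ∑ k, G j k * X j * E a k) * gind⁻¹ a c * E c i := by
    intro X i
    simp only [hP2X]
    simp_rw [hP2]
    calc ∑ j, ∑ k, (γ^2 * ∑ a, ∑ c, E a i * gind⁻¹ a c * E c j) * G j k * X k
        = ∑ j : Fin m, ∑ k : Fin m, ∑ a, ∑ c,
            γ^2 * (E a i * gind⁻¹ a c * E c j * G j k * X k) := by
          simp only [Finset.mul_sum, Finset.sum_mul]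
          exact Finset.sum_congr rfl fun j _ => Finset.sum_congr rfl fun k _ =>
            Finset.sum_congr rfl fun a _ => Finset.sum_congr rfl fun c _ => by ring
      _ = ∑ a, ∑ c, ∑ j : Fin m, ∑ k : Fin m,
            γ^2 * (E a i * gind⁻¹ a c * E c j * G j k * X k) :=
          sum4_swap (fun a c j k => γ^2 * (E a i * gind⁻¹ a c * E c j * G j k * X k))
      _ = ∑ a, ∑ c, ∑ j : Fin m, ∑ k : Fin m,
            γ^2 * (E c i * gind⁻¹ c a * E a j * G j k * X k) := Finset.sum_comm
      _ = ∑ a, ∑ c, ∑ j : Fin m, ∑ k : Fin m,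
            γ^2 * (E c i * gind⁻¹ c a * E a k * G k j * X j) :=
          Finset.sum_congr rfl fun a _ => Finset.sum_congr rfl fun c _ => Finset.sum_comm
      _ = γ ^ 2 * ∑ a, ∑ c, (∑ j, ∑ k, G j k * X j * E a k) * gind⁻¹ a c * E c i := by
          simp only [Finset.mul_sum, Finset.sum_mul]
          refine Finset.sum_congr rfl fun a _ => Finset.sum_congr rfl fun c _ =>
            Finset.sum_congr rfl fun j _ => Finset.sum_congr rfl fun k _ => ?_
          rw [hGsym k j, hQsym c a]; ring
  refine ⟨claim1, ?_⟩
  intro Y i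
  rw [claim1]
  congr 1
  have hW : ∀ a : Fin (d+1),
      (∑ j, ∑ k, G j k * (∑ b, Y b * pd b (x j) p) * E a k) = ∑ b, Y b * gind b a := by
    intro a
    calc ∑ j, ∑ k, G j k * (∑ b, Y b * pd b (x j) p) * E a k
        = ∑ j : Fin m, ∑ k : Fin m, ∑ b, Y b * (G j k * E b j * E a k) := by
          simp only [Finset.mul_sum, Finset.sum_mul]
          exact Finset.sum_congr rfl fun j _ => Finset.sum_congr rfl fun k _ =>
            Finset.sum_congr rfl fun b _ => by ring
      _ = ∑ j : Fin m, ∑ b, ∑ k : Fin m, Y b * (G j k * E b j * E a k) :=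
          Finset.sum_congr rfl fun j _ => Finset.sum_comm
      _ = ∑ b, ∑ j : Fin m, ∑ k : Fin m, Y b * (G j k * E b j * E a k) := Finset.sum_comm
      _ = ∑ b, Y b * gind b a := by
          refine Finset.sum_congr rfl fun b _ => ?_
          rw [hgind' b a, Finset.mul_sum]
          refine Finset.sum_congr rfl fun j _ => ?_
          rw [Finset.mul_sum]
  have hone : ∀ b c : Fin (d+1), (∑ a, gind b a * gind⁻¹ a c) = if b = c then 1 else 0 := by
    intro b c
    rw [← Matrix.mul_apply, Matrix.mul_nonsing_inv gind hdetu, Matrix.one_apply]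
  calc ∑ a, ∑ c, (∑ j, ∑ k, G j k * (∑ b, Y b * pd b (x j) p) * E a k) * gind⁻¹ a c * E c i
      = ∑ a, ∑ c, (∑ b, Y b * gind b a) * gind⁻¹ a c * E c i := by
        exact Finset.sum_congr rfl fun a _ => Finset.sum_congr rfl fun c _ => by rw [hW a]
    _ = ∑ a, ∑ c, ∑ b, Y b * gind b a * gind⁻¹ a c * E c i := by
        refine Finset.sum_congr rfl fun a _ => Finset.sum_congr rfl fun c _ => ?_
        rw [Finset.sum_mul, Finset.sum_mul]
    _ = ∑ c, ∑ a, ∑ b, Y b * gind b a * gind⁻¹ a c * E c i := Finset.sum_comm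
    _ = ∑ c, ∑ b, ∑ a, Y b * gind b a * gind⁻¹ a c * E c i :=
        Finset.sum_congr rfl fun c _ => Finset.sum_comm
    _ = ∑ c, ∑ b, (Y b * E c i) * ∑ a, gind b a * gind⁻¹ a c := by
        refine Finset.sum_congr rfl fun c _ => Finset.sum_congr rfl fun b _ => ?_
        rw [Finset.mul_sum]
        exact Finset.sum_congr rfl fun a _ => by ring
    _ = ∑ c, ∑ b, if b = c then Y b * E c i else 0 := by
        refine Finset.sum_congr rfl fun c _ => Finset.sum_congr rfl fun b _ => ?_
        rw [hone b c]
        by_cases h : b = c <;> simp [h]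
    _ = ∑ c, Y c * E c i := by
        refine Finset.sum_congr rfl fun c _ => ?_
        rw [Finset.sum_ite_eq' Finset.univ c (fun b => Y b * E c i)]
        simp
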